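/- arXiv:2006.11759 — 4 statements merged into one kernel-verified Lean document; each statement's English description precedes it below -/
import Mathlib

section
/- Let d ≥ 1 and fix w₁,…,w_d > 0. For each j = 1,…,d let G_j : [0,1] × [0,1] → [0,1] be a function with G_j(1,v) = 1 for all v ∈ [0,1], such that the partial derivative g_j(u,v) = ∂G_j(u,v)/∂u exists and is jointly continuous on [0,1] × [0,1]. Then lim_{u→0⁺} (1/u) ∫₀¹ [1 − min_{1≤j≤d} G_j(1 − u·w_j, v)] dv = ∫₀¹ max_{1≤j≤d} { w_j · g_j(1,v) } dv. -/
open MeasureTheory Filter Set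

-- helper lemma experiments
lemma aux_tendsto_sup' {α ι : Type*} {l : Filter α} (s : Finset ι) (hs : s.Nonempty)
    (f : ι → α → ℝ) (a : ι → ℝ) (h : ∀ i ∈ s, Tendsto (f i) l (nhds (a i))) :
    Tendsto (fun u => s.sup' hs (fun i => f i u)) l (nhds (s.sup' hs a)) := by
  revert h
  induction hs using Finset.Nonempty.cons_induction with
  | singleton i =>
      intro h
      simpa using h i (Finset.mem_singleton_self i)
  | cons i s hi hs ih =>
      intro h
      simp only [Finset.sup'_cons hs]
      exact (h i (by simp)).max (ih fun j hj => h j (by simp [hj]))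

lemma aux_one_sub_inf' {ι : Type*} (s : Finset ι) (hs : s.Nonempty) (x : ι → ℝ) :
    1 - s.inf' hs x = s.sup' hs (fun i => 1 - x i) := by
  apply le_antisymm
  · obtain ⟨i, hi, hix⟩ := s.exists_mem_eq_inf' hs x
    rw [hix]
    exact Finset.le_sup' (fun i => 1 - x i) hi
  · refine Finset.sup'_le _ _ fun i hi => ?_
    have := Finset.inf'_le x hi
    linarith

lemma aux_mul_sup' {ι : Type*} (s : Finset ι) (hs : s.Nonempty) (x : ι → ℝ) {c : ℝ}
    (hc : 0 ≤ c) : c * s.sup' hs x = s.sup' hs (fun i => c * x i) := by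
  exact Finset.comp_sup'_eq_sup'_comp hs (fun y => c * y) (fun a b => mul_max_of_nonneg a b hc)

lemma aux_abs_sup'_le {ι : Type*} (s : Finset ι) (hs : s.Nonempty) (x : ι → ℝ) {C : ℝ}
    (h : ∀ i ∈ s, |x i| ≤ C) : |s.sup' hs x| ≤ C := by
  rw [abs_le]
  constructor
  · obtain ⟨i, hi⟩ := hs
    exact le_trans (abs_le.1 (h i hi)).1 (Finset.le_sup' x hi)
  · exact Finset.sup'_le _ _ fun i hi => (abs_le.1 (h i hi)).2

/-- Proposition 5 (analytic content): with comonotonic residual dependence, the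
stable tail dependence function of the conditional normal copula is
`ℓ(w) = ∫₀¹ max_j w_j g_j(1,v) dv`. -/
theorem stmt0 (d : ℕ) (hd : 0 < d) (w : Fin d → ℝ) (hw : ∀ j, 0 < w j)
    (G g : Fin d → ℝ → ℝ → ℝ)
    (hrange : ∀ j, ∀ u ∈ Set.Icc (0:ℝ) 1, ∀ v ∈ Set.Icc (0:ℝ) 1,
      G j u v ∈ Set.Icc (0:ℝ) 1)
    (hG1 : ∀ j, ∀ v ∈ Set.Icc (0:ℝ) 1, G j 1 v = 1)
    (hderiv : ∀ j, ∀ u ∈ Set.Icc (0:ℝ) 1, ∀ v ∈ Set.Icc (0:ℝ) 1,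
      HasDerivWithinAt (fun u' => G j u' v) (g j u v) (Set.Icc (0:ℝ) 1) u)
    (hcont : ∀ j, ContinuousOn (fun p : ℝ × ℝ => g j p.1 p.2)
      (Set.Icc (0:ℝ) 1 ×ˢ Set.Icc (0:ℝ) 1)) :
    Filter.Tendsto
      (fun u : ℝ => (1 / u) * ∫ v in (0:ℝ)..1, (1 - ⨅ j, G j (1 - u * w j) v))
      (nhdsWithin 0 (Set.Ioi 0))
      (nhds (∫ v in (0:ℝ)..1, ⨆ j, w j * g j 1 v)) := by
  haveI : Nonempty (Fin d) := Fin.pos_iff_nonempty.mp hd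
  set W : ℝ := Finset.univ.sup' Finset.univ_nonempty w with hWdef
  have hwW : ∀ j, w j ≤ W := fun j => Finset.le_sup' w (Finset.mem_univ j)
  have hW : 0 < W := lt_of_lt_of_le (hw (Classical.arbitrary _)) (hwW _)
  set ε : ℝ := W⁻¹ with hεdef
  have hε : 0 < ε := inv_pos.2 hW
  -- membership of 1 - u * w j in [0,1]
  have hsub : ∀ u ∈ Ioo (0:ℝ) ε, ∀ j, (1 - u * w j) ∈ Icc (0:ℝ) 1 := by
    intro u hu j
    have h1 : u * W < 1 := by
      have := mul_lt_mul_of_pos_right hu.2 hW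
      rwa [inv_mul_cancel₀ hW.ne'] at this
    have h2 : u * w j ≤ u * W := mul_le_mul_of_nonneg_left (hwW j) hu.1.le
    have h3 : 0 < u * w j := mul_pos hu.1 (hw j)
    constructor <;> nlinarith
  -- uniform bound on g
  have hbd : ∀ j, ∃ C, ∀ p ∈ (Icc (0:ℝ) 1 ×ˢ Icc (0:ℝ) 1), ‖g j p.1 p.2‖ ≤ C := fun j =>
    (isCompact_Icc.prod isCompact_Icc).exists_bound_of_continuousOn (hcont j)
  choose C hC using hbd
  set M0 : ℝ := max (Finset.univ.sup' Finset.univ_nonempty C) 0 with hM0def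
  have hM0nn : 0 ≤ M0 := le_max_right _ _
  have hM0 : ∀ j, ∀ t ∈ Icc (0:ℝ) 1, ∀ v ∈ Icc (0:ℝ) 1, |g j t v| ≤ M0 := by
    intro j t ht v hv
    have := hC j (t, v) ⟨ht, hv⟩
    exact le_trans this (le_trans (Finset.le_sup' C (Finset.mem_univ j)) (le_max_left _ _))
  -- continuity of g in first variable
  have hg1 : ∀ j, ∀ v ∈ Icc (0:ℝ) 1, ContinuousOn (fun t => g j t v) (Icc (0:ℝ) 1) :=
    fun j v hv => (hcont j).comp
      ((continuous_id.prodMk continuous_const).continuousOn) (fun t ht => ⟨ht, hv⟩)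
  have hg2 : ∀ j, ∀ t ∈ Icc (0:ℝ) 1, ContinuousOn (fun v => g j t v) (Icc (0:ℝ) 1) :=
    fun j t ht => (hcont j).comp
      ((continuous_const.prodMk continuous_id).continuousOn) (fun v hv => ⟨ht, hv⟩)
  -- FTC
  have hFTC : ∀ j, ∀ v ∈ Icc (0:ℝ) 1, ∀ a ∈ Icc (0:ℝ) 1,
      (∫ t in a..1, g j t v) = 1 - G j a v := by
    intro j v hv a ha
    have hcontG : ContinuousOn (fun u' => G j u' v) (Icc a 1) := by
      intro x hx
      exact ((hderiv j x ⟨le_trans ha.1 hx.1, hx.2⟩ v hv).continuousWithinAt).mono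
        (Icc_subset_Icc ha.1 le_rfl)
    have hder : ∀ x ∈ Ioo a 1, HasDerivWithinAt (fun u' => G j u' v) (g j x v) (Ioi x) x := by
      intro x hx
      have hx' : x ∈ Icc (0:ℝ) 1 := ⟨le_trans ha.1 hx.1.le, hx.2.le⟩
      exact ((hderiv j x hx' v hv).hasDerivAt
        (Icc_mem_nhds (lt_of_le_of_lt ha.1 hx.1) hx.2)).hasDerivWithinAt
    have hint : IntervalIntegrable (fun t => g j t v) volume a 1 := by
      have : ContinuousOn (fun t => g j t v) (uIcc a 1) := by
        rw [uIcc_of_le ha.2]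
        exact (hg1 j v hv).mono (Icc_subset_Icc ha.1 le_rfl)
      exact this.intervalIntegrable
    have key := intervalIntegral.integral_eq_sub_of_hasDeriv_right_of_le ha.2 hcontG hder hint
    rw [key, hG1 j v hv]
  -- integral bound
  have hIbd : ∀ j, ∀ v ∈ Icc (0:ℝ) 1, ∀ a ∈ Icc (0:ℝ) 1,
      |∫ t in a..1, g j t v| ≤ M0 * (1 - a) := by
    intro j v hv a ha
    have := intervalIntegral.norm_integral_le_of_norm_le_const (C := M0)
      (f := fun t => g j t v) (a := a) (b := 1) ?_
    · rw [Real.norm_eq_abs] at this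
      rwa [abs_of_nonneg (by linarith [ha.2] : (0:ℝ) ≤ 1 - a)] at this
    · intro x hx
      rw [uIoc_of_le ha.2] at hx
      exact hM0 j x ⟨le_trans ha.1 hx.1.le, hx.2⟩ v hv
  -- rewriting the integrand via FTC, for u ∈ Ioo 0 ε
  have hEq : ∀ u ∈ Ioo (0:ℝ) ε, ∀ v ∈ Icc (0:ℝ) 1,
      (1/u) * (1 - ⨅ j, G j (1 - u * w j) v) =
      Finset.univ.sup' Finset.univ_nonempty
        (fun j => (1/u) * ∫ t in (1 - u * w j)..1, g j t v) := by
    intro u hu v hv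
    rw [← Finset.inf'_univ_eq_ciInf, aux_one_sub_inf',
      aux_mul_sup' _ _ _ (one_div_nonneg.2 hu.1.le)]
    refine Finset.sup'_congr _ rfl fun j _ => ?_
    rw [hFTC j v hv _ (hsub u hu j)]
  have hEq2 : ∀ u ∈ Ioo (0:ℝ) ε, ∀ v ∈ Icc (0:ℝ) 1,
      (1/u) * (1 - ⨅ j, G j (1 - u * w j) v) =
      Finset.univ.sup' Finset.univ_nonempty
        (fun j => (1/u) * (1 - G j (1 - u * w j) v)) := by
    intro u hu v hv
    rw [← Finset.inf'_univ_eq_ciInf, aux_one_sub_inf',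
      aux_mul_sup' _ _ _ (one_div_nonneg.2 hu.1.le)]
  -- pointwise limit for each j
  have hptj : ∀ j, ∀ v ∈ Icc (0:ℝ) 1,
      Tendsto (fun u => (1/u) * (1 - G j (1 - u * w j) v)) (nhdsWithin (0:ℝ) (Ioi 0))
        (nhds (w j * g j 1 v)) := by
    intro j v hv
    have hwj := hw j
    have hφ : HasDerivWithinAt (fun u : ℝ => 1 - u * w j) (-(w j)) (Icc 0 (w j)⁻¹) 0 := by
      have h0 : HasDerivAt (fun u : ℝ => 1 - u * w j) (-(1 * w j)) 0 :=
        ((hasDerivAt_id (0:ℝ)).mul_const (w j)).const_sub 1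
      simpa using h0.hasDerivWithinAt
    have hGd : HasDerivWithinAt (fun u' => G j u' v) (g j 1 v) (Icc 0 1)
        ((fun u : ℝ => 1 - u * w j) 0) := by
      simpa using hderiv j 1 ⟨zero_le_one, le_refl 1⟩ v hv
    have hmaps : MapsTo (fun u : ℝ => 1 - u * w j) (Icc 0 (w j)⁻¹) (Icc 0 1) := by
      intro u hu
      have h1 : u * w j ≤ 1 := by
        have := mul_le_mul_of_nonneg_right hu.2 hwj.le
        rwa [inv_mul_cancel₀ hwj.ne'] at this
      have h2 : 0 ≤ u * w j := mul_nonneg hu.1 hwj.le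
      refine ⟨?_, ?_⟩
      · show (0:ℝ) ≤ 1 - u * w j
        linarith
      · show (1:ℝ) - u * w j ≤ 1
        linarith
    have hcomp := HasDerivWithinAt.comp (0:ℝ) hGd hφ hmaps
    rw [hasDerivWithinAt_iff_tendsto_slope] at hcomp
    have hsub' : Ioo (0:ℝ) (w j)⁻¹ ⊆ Icc 0 (w j)⁻¹ \ {0} :=
      fun x hx => ⟨⟨hx.1.le, hx.2.le⟩, ne_of_gt hx.1⟩
    have h2 : Tendsto (slope ((fun u' => G j u' v) ∘ fun u => 1 - u * w j) 0)
        (nhdsWithin (0:ℝ) (Ioi 0)) (nhds (g j 1 v * -(w j))) := by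
      rw [← nhdsWithin_Ioo_eq_nhdsGT (inv_pos.2 hwj)]
      exact hcomp.mono_left (nhdsWithin_mono 0 hsub')
    have h3 := h2.neg
    rw [show -(g j 1 v * -(w j)) = w j * g j 1 v by ring] at h3
    refine Filter.Tendsto.congr' ?_ h3
    filter_upwards [self_mem_nhdsWithin] with u hu
    have hune : (u:ℝ) ≠ 0 := ne_of_gt hu
    rw [slope_def_field]
    simp only [Function.comp]
    rw [show (1:ℝ) - 0 * w j = 1 by ring, hG1 j v hv]
    field_simp
    ring
  -- pointwise limit of the full integrand
  have hlim : ∀ v ∈ Icc (0:ℝ) 1,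
      Tendsto (fun u => (1/u) * (1 - ⨅ j, G j (1 - u * w j) v))
        (nhdsWithin (0:ℝ) (Ioi 0)) (nhds (⨆ j, w j * g j 1 v)) := by
    intro v hv
    rw [← Finset.sup'_univ_eq_ciSup]
    have base := aux_tendsto_sup' Finset.univ Finset.univ_nonempty
      (fun j u => (1/u) * (1 - G j (1 - u * w j) v)) (fun j => w j * g j 1 v)
      (fun j _ => hptj j v hv)
    refine base.congr' ?_
    filter_upwards [Ioo_mem_nhdsGT_of_mem ⟨le_refl (0:ℝ), hε⟩] with u hu
    exact (hEq2 u hu v hv).symm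
  -- continuity in v of the FTC integrals
  have hcontInt : ∀ j, ∀ a ∈ Icc (0:ℝ) 1,
      ContinuousOn (fun v => ∫ t in a..1, g j t v) (Icc (0:ℝ) 1) := by
    intro j a ha
    have h1 : ∀ v, (∫ t in a..1, g j t v) = ∫ t in Ioc a 1, g j t v :=
      fun v => intervalIntegral.integral_of_le ha.2
    simp only [h1]
    apply continuousOn_of_dominated (bound := fun _ => M0)
    · intro v hv
      exact (((hg1 j v hv).mono (fun t ht => ⟨le_trans ha.1 ht.1.le, ht.2⟩)).aestronglyMeasurable
        measurableSet_Ioc)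
    · intro v hv
      refine (ae_restrict_mem measurableSet_Ioc).mono fun t ht => ?_
      exact hM0 j t ⟨le_trans ha.1 ht.1.le, ht.2⟩ v hv
    · exact integrableOn_const measure_Ioc_lt_top.ne
    · refine (ae_restrict_mem measurableSet_Ioc).mono fun t ht => ?_
      exact hg2 j t ⟨le_trans ha.1 ht.1.le, ht.2⟩
  -- rewrite interval integrals as set integrals
  simp only [intervalIntegral.integral_of_le zero_le_one]
  -- dominated convergence
  simp only [← MeasureTheory.integral_const_mul]
  apply tendsto_integral_filter_of_dominated_convergence (bound := fun _ => M0 * W)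
  · -- measurability
    filter_upwards [Ioo_mem_nhdsGT_of_mem ⟨le_refl (0:ℝ), hε⟩] with u hu
    have hΦ : ContinuousOn (fun v => Finset.univ.sup' Finset.univ_nonempty
        (fun j => (1/u) * ∫ t in (1 - u * w j)..1, g j t v)) (Icc (0:ℝ) 1) := by
      intro v hv
      exact aux_tendsto_sup' Finset.univ Finset.univ_nonempty _ _
        (fun j _ => (continuousOn_const.mul (hcontInt j _ (hsub u hu j))) v hv)
    refine AEStronglyMeasurable.congr
      ((hΦ.mono Ioc_subset_Icc_self).aestronglyMeasurable measurableSet_Ioc) ?_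
    refine (ae_restrict_mem measurableSet_Ioc).mono fun v hv => ?_
    exact (hEq u hu v (Ioc_subset_Icc_self hv)).symm
  · -- bound
    filter_upwards [Ioo_mem_nhdsGT_of_mem ⟨le_refl (0:ℝ), hε⟩] with u hu
    refine (ae_restrict_mem measurableSet_Ioc).mono fun v hv => ?_
    have hv' : v ∈ Icc (0:ℝ) 1 := Ioc_subset_Icc_self hv
    rw [Real.norm_eq_abs, hEq u hu v hv']
    refine aux_abs_sup'_le _ _ _ fun j _ => ?_
    have h1 := hIbd j v hv' (1 - u * w j) (hsub u hu j)
    rw [show (1:ℝ) - (1 - u * w j) = u * w j by ring] at h1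
    have habs : |(1/u) * ∫ t in (1 - u * w j)..1, g j t v| =
        (1/u) * |∫ t in (1 - u * w j)..1, g j t v| := by
      rw [abs_mul, abs_of_nonneg (one_div_nonneg.2 hu.1.le)]
    rw [habs]
    calc (1/u) * |∫ t in (1 - u * w j)..1, g j t v|
        ≤ (1/u) * (M0 * (u * w j)) :=
          mul_le_mul_of_nonneg_left h1 (one_div_nonneg.2 hu.1.le)
      _ = M0 * w j := by field_simp [hu.1.ne']
      _ ≤ M0 * W := mul_le_mul_of_nonneg_left (hwW j) hM0nn
  · exact integrableOn_const measure_Ioc_lt_top.ne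
  · refine (ae_restrict_mem measurableSet_Ioc).mono fun v hv => ?_
    exact hlim v (Ioc_subset_Icc_self hv)
end

section
/- Let Φ denote the standard normal CDF and Φ⁻¹ its inverse on (0,1). For every u ∈ (0,1), define D(u,δ) = 2∫₀^u Φ(δ·Φ⁻¹(v)/√(2−δ²)) dv for δ ∈ [0,1]. Then for each fixed u ∈ (0,1), as δ → 0⁺ one has D(u,δ) = u − (δ/√π)·φ(Φ⁻¹(u)) + O(δ³); that is, there exist constants C > 0 and δ₀ ∈ (0,1) such that |D(u,δ) − u + (δ/√π)·φ(Φ⁻¹(u))| ≤ C·δ³ for all δ ∈ (0,δ₀). -/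
open MeasureTheory Filter Set

/-- The standard normal density. -/
noncomputable def stdPdf (t : ℝ) : ℝ := Real.exp (-(t ^ 2) / 2) / Real.sqrt (2 * Real.pi)

/-- The standard normal cumulative distribution function. -/
noncomputable def stdCdf (x : ℝ) : ℝ := ∫ t in Set.Iic x, stdPdf t

/-- The inverse of the standard normal CDF on (0,1). -/
noncomputable def stdQuantile : ℝ → ℝ := Function.invFun stdCdf

/-- The diagonal of the bivariate Gaussian copula `C_N(u,u;ρ)` with `ρ = 1 - δ²`. -/
noncomputable def gaussDiag (u δ : ℝ) : ℝ :=
  2 * ∫ v in (0:ℝ)..u, stdCdf (δ * stdQuantile v / Real.sqrt (2 - δ ^ 2))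

lemma sqrt_two_pi_pos : 0 < Real.sqrt (2 * Real.pi) :=
  Real.sqrt_pos.mpr (by positivity)

lemma one_le_sqrt_two_pi : 1 ≤ Real.sqrt (2 * Real.pi) := by
  rw [show (1:ℝ) = Real.sqrt 1 by simp]
  exact Real.sqrt_le_sqrt (by nlinarith [Real.pi_gt_three])

lemma stdPdf_pos (t : ℝ) : 0 < stdPdf t :=
  div_pos (Real.exp_pos _) sqrt_two_pi_pos

lemma stdPdf_le_one (t : ℝ) : stdPdf t ≤ 1 := by
  rw [stdPdf, div_le_one sqrt_two_pi_pos]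
  calc Real.exp (-(t^2)/2) ≤ 1 := by
        rw [Real.exp_le_one_iff]; nlinarith [sq_nonneg t]
    _ ≤ Real.sqrt (2 * Real.pi) := one_le_sqrt_two_pi

lemma stdPdf_cont : Continuous stdPdf := by
  unfold stdPdf
  exact (Real.continuous_exp.comp (by continuity)).div_const _

lemma integrable_stdPdf : Integrable stdPdf := by
  have h : Integrable (fun t : ℝ => Real.exp (-(1/2 : ℝ) * t ^ 2)) :=
    integrable_exp_neg_mul_sq (by norm_num)
  have := h.div_const (Real.sqrt (2 * Real.pi))
  refine this.congr (Eventually.of_forall fun t => ?_)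
  simp [stdPdf]; ring_nf

lemma integrable_mul_stdPdf : Integrable (fun x : ℝ => x * stdPdf x) := by
  have h : Integrable (fun t : ℝ => t * Real.exp (-(1/2 : ℝ) * t ^ 2)) :=
    integrable_mul_exp_neg_mul_sq (by norm_num)
  have := h.div_const (Real.sqrt (2 * Real.pi))
  refine this.congr (Eventually.of_forall fun t => ?_)
  simp [stdPdf]; ring_nf

lemma integrable_cube_stdPdf : Integrable (fun x : ℝ => |x| ^ 3 * stdPdf x) := by
  have h : Integrable (fun t : ℝ => t ^ (3:ℝ) * Real.exp (-(1/2 : ℝ) * t ^ 2)) :=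
    integrable_rpow_mul_exp_neg_mul_sq (by norm_num) (by norm_num)
  have h2 : Integrable (fun t : ℝ => t ^ (3:ℕ) * Real.exp (-(1/2 : ℝ) * t ^ 2)) := by
    refine h.congr (Eventually.of_forall fun t => ?_)
    show t ^ (3:ℝ) * _ = t ^ (3:ℕ) * _
    rw [← Real.rpow_natCast t 3]; norm_num
  have h3 := (h2.abs).div_const (Real.sqrt (2 * Real.pi))
  refine h3.congr (Eventually.of_forall fun t => ?_)
  show |t ^ 3 * Real.exp (-(1/2:ℝ) * t ^ 2)| / Real.sqrt (2*Real.pi) = |t| ^ 3 * stdPdf t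
  rw [abs_mul, abs_pow, abs_of_nonneg (Real.exp_pos _).le, stdPdf,
    show -(t^2)/2 = -(1/2:ℝ)*t^2 by ring]
  ring

lemma integral_stdPdf : ∫ t : ℝ, stdPdf t = 1 := by
  have h : ∫ t : ℝ, Real.exp (-(1/2 : ℝ) * t ^ 2) = Real.sqrt (Real.pi / (1/2)) :=
    integral_gaussian (1/2)
  have heq : ∀ t : ℝ, stdPdf t = Real.exp (-(1/2 : ℝ) * t ^ 2) / Real.sqrt (2 * Real.pi) := by
    intro t; simp [stdPdf]; ring_nf
  rw [show stdPdf = fun t => Real.exp (-(1/2 : ℝ) * t ^ 2) / Real.sqrt (2 * Real.pi)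
    from funext heq]
  rw [integral_div, h, show Real.pi / (1/2) = 2 * Real.pi by ring]
  exact div_self (ne_of_gt sqrt_two_pi_pos)

lemma stdPdf_hasDerivAt (x : ℝ) : HasDerivAt stdPdf (-x * stdPdf x) x := by
  have h1 : HasDerivAt (fun t : ℝ => -(t ^ 2) / 2) (-x) x := by
    have := ((hasDerivAt_pow 2 x).neg).div_const 2
    simpa using this.congr_deriv (by ring)
  have h2 := (h1.exp).div_const (Real.sqrt (2 * Real.pi))
  refine h2.congr_deriv ?_
  simp [stdPdf]; ring

lemma stdCdf_sub (x y : ℝ) : stdCdf y - stdCdf x = ∫ t in x..y, stdPdf t := by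
  rw [stdCdf, stdCdf]
  exact intervalIntegral.integral_Iic_sub_Iic integrable_stdPdf.integrableOn
    integrable_stdPdf.integrableOn

lemma stdCdf_hasDerivAt (x : ℝ) : HasDerivAt stdCdf (stdPdf x) x := by
  have h : HasDerivAt (fun y => stdCdf 0 + ∫ t in (0:ℝ)..y, stdPdf t) (stdPdf x) x := by
    refine (intervalIntegral.integral_hasDerivAt_right
      (integrable_stdPdf.intervalIntegrable)
      (stdPdf_cont.stronglyMeasurableAtFilter _ _)
      stdPdf_cont.continuousAt).const_add (stdCdf 0)
  have heq : stdCdf = fun y => stdCdf 0 + ∫ t in (0:ℝ)..y, stdPdf t := by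
    funext y
    have := stdCdf_sub 0 y
    linarith
  rw [heq]
  exact h

lemma stdCdf_cont : Continuous stdCdf :=
  continuous_iff_continuousAt.mpr fun x => (stdCdf_hasDerivAt x).continuousAt

lemma stdCdf_strictMono : StrictMono stdCdf := by
  intro x y hxy
  have h : 0 < ∫ t in x..y, stdPdf t :=
    intervalIntegral.intervalIntegral_pos_of_pos
      (integrable_stdPdf.intervalIntegrable) stdPdf_pos hxy
  have := stdCdf_sub x y
  linarith

lemma stdCdf_pos (x : ℝ) : 0 < stdCdf x := by
  have h0 : 0 ≤ stdCdf (x - 1) :=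
    setIntegral_nonneg measurableSet_Iic fun t _ => (stdPdf_pos t).le
  have := stdCdf_strictMono (show x - 1 < x by linarith)
  linarith

lemma stdCdf_tendsto_atBot : Tendsto stdCdf atBot (nhds 0) := by
  have h : Tendsto (fun x : ℝ => ∫ t : ℝ, Set.indicator (Iic x) stdPdf t) atBot
      (nhds (∫ t : ℝ, (0:ℝ))) := by
    refine tendsto_integral_filter_of_dominated_convergence stdPdf
      (Eventually.of_forall fun x =>
        (stdPdf_cont.aestronglyMeasurable).indicator measurableSet_Iic)
      (Eventually.of_forall fun x => Eventually.of_forall fun t => ?_)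
      integrable_stdPdf
      (Eventually.of_forall fun t => ?_)
    · rw [Real.norm_eq_abs]
      rcases le_or_gt t x with h | h
      · rw [Set.indicator_of_mem (mem_Iic.mpr h) stdPdf]; exact le_of_eq (abs_of_pos (stdPdf_pos t))
      · rw [Set.indicator_of_notMem (by simpa using h)]
        simpa using (stdPdf_pos t).le
    · refine Tendsto.congr' ?_ tendsto_const_nhds
      filter_upwards [eventually_lt_atBot t] with x hx
      rw [Set.indicator_of_notMem (by simpa using hx)]
  simp only [integral_zero] at h
  refine h.congr fun x => ?_
  rw [integral_indicator measurableSet_Iic]; rfl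

lemma stdCdf_tendsto_atTop : Tendsto stdCdf atTop (nhds 1) := by
  have h : Tendsto (fun x : ℝ => ∫ t : ℝ, Set.indicator (Iic x) stdPdf t) atTop
      (nhds (∫ t : ℝ, stdPdf t)) := by
    refine tendsto_integral_filter_of_dominated_convergence stdPdf
      (Eventually.of_forall fun x =>
        (stdPdf_cont.aestronglyMeasurable).indicator measurableSet_Iic)
      (Eventually.of_forall fun x => Eventually.of_forall fun t => ?_)
      integrable_stdPdf
      (Eventually.of_forall fun t => ?_)
    · rw [Real.norm_eq_abs]
      rcases le_or_gt t x with h | h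
      · rw [Set.indicator_of_mem (mem_Iic.mpr h) stdPdf]; exact le_of_eq (abs_of_pos (stdPdf_pos t))
      · rw [Set.indicator_of_notMem (by simpa using h)]
        simpa using (stdPdf_pos t).le
    · refine Tendsto.congr' ?_ tendsto_const_nhds
      filter_upwards [eventually_ge_atTop t] with x hx
      rw [Set.indicator_of_mem (by simpa using hx)]
  rw [integral_stdPdf] at h
  refine h.congr fun x => ?_
  rw [integral_indicator measurableSet_Iic]; rfl

lemma stdCdf_lt_one (x : ℝ) : stdCdf x < 1 := by
  by_contra h
  push_neg at h
  have hx1 : 1 < stdCdf (x + 1) := lt_of_le_of_lt h (stdCdf_strictMono (lt_add_one x))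
  obtain ⟨y, hy1, hy2⟩ :=
    ((stdCdf_tendsto_atTop.eventually_lt_const hx1).and (eventually_ge_atTop (x+1))).exists
  have := stdCdf_strictMono.monotone hy2
  linarith

lemma stdCdf_surjOn : ∀ u ∈ Ioo (0:ℝ) 1, ∃ x, stdCdf x = u := by
  intro u hu
  obtain ⟨a, ha⟩ := (stdCdf_tendsto_atBot.eventually_lt_const hu.1).exists
  obtain ⟨b, hb⟩ := (stdCdf_tendsto_atTop.eventually_const_lt hu.2).exists
  have hab : a ≤ b := by
    by_contra h
    push_neg at h
    have := stdCdf_strictMono h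
    linarith
  have := intermediate_value_Icc hab stdCdf_cont.continuousOn
    (show u ∈ Icc (stdCdf a) (stdCdf b) from ⟨ha.le, hb.le⟩)
  obtain ⟨x, _, hx⟩ := this
  exact ⟨x, hx⟩

lemma stdCdf_right_inv {u : ℝ} (hu : u ∈ Ioo (0:ℝ) 1) : stdCdf (stdQuantile u) = u :=
  Function.invFun_eq (stdCdf_surjOn u hu)

lemma stdCdf_left_inv (x : ℝ) : stdQuantile (stdCdf x) = x :=
  Function.leftInverse_invFun stdCdf_strictMono.injective x

lemma stdCdf_image_Iio (b : ℝ) : stdCdf '' (Iio b) = Ioo 0 (stdCdf b) := by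
  ext v
  constructor
  · rintro ⟨x, hx, rfl⟩
    exact ⟨stdCdf_pos x, stdCdf_strictMono hx⟩
  · rintro ⟨h0, h1⟩
    have hv : v ∈ Ioo (0:ℝ) 1 := ⟨h0, lt_trans h1 (stdCdf_lt_one b)⟩
    refine ⟨stdQuantile v, ?_, stdCdf_right_inv hv⟩
    have : stdCdf (stdQuantile v) < stdCdf b := by rw [stdCdf_right_inv hv]; exact h1
    exact stdCdf_strictMono.lt_iff_lt.mp this
    
lemma stdCdf_zero : stdCdf 0 = 1/2 := by
  have h1 : ∫ t in Iic (0:ℝ), stdPdf (-t) = ∫ t in Ioi (-(0:ℝ)), stdPdf t :=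
    integral_comp_neg_Iic 0 stdPdf
  have h2 : ∀ t : ℝ, stdPdf (-t) = stdPdf t := by
    intro t; simp [stdPdf]
  simp only [h2, neg_zero] at h1
  have h4 : stdCdf 0 + ∫ t in Ioi (0:ℝ), stdPdf t = 1 := by
    show (∫ t in Iic (0:ℝ), stdPdf t) + _ = 1
    rw [← integral_stdPdf, show Ioi (0:ℝ) = (Iic 0)ᶜ by simp]
    exact integral_add_compl measurableSet_Iic integrable_stdPdf
  have h5 : stdCdf 0 = ∫ t in Iic (0:ℝ), stdPdf t := rfl
  linarith

/-- Taylor bound for the normal CDF at 0. -/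
lemma stdCdf_taylor (x : ℝ) : |stdCdf x - 1/2 - stdPdf 0 * x| ≤ |x| ^ 3 := by
  have h1 : stdCdf x - 1/2 - stdPdf 0 * x = ∫ t in (0:ℝ)..x, (stdPdf t - stdPdf 0) := by
    rw [intervalIntegral.integral_sub integrable_stdPdf.intervalIntegrable
      intervalIntegrable_const]
    have hx := stdCdf_sub 0 x
    rw [stdCdf_zero] at hx
    simp only [intervalIntegral.integral_const, smul_eq_mul, sub_zero]
    rw [← hx]
    ring
  have hs := one_le_sqrt_two_pi
  have hsp := sqrt_two_pi_pos
  have key : ∀ t ∈ Set.uIoc (0:ℝ) x, ‖stdPdf t - stdPdf 0‖ ≤ x ^ 2 / 2 := by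
    intro t ht
    have htx : t ^ 2 ≤ x ^ 2 := by
      rcases Set.mem_uIoc.mp ht with h | h
      · nlinarith [h.1, h.2]
      · nlinarith [h.1, h.2]
    have e1 : Real.exp (-(t^2)/2) ≤ 1 := by
      rw [Real.exp_le_one_iff]; nlinarith [sq_nonneg t]
    have e2 : 1 - t ^ 2 / 2 ≤ Real.exp (-(t^2)/2) := by
      have := Real.add_one_le_exp (-(t^2)/2); linarith
    have h0 : stdPdf 0 = 1 / Real.sqrt (2 * Real.pi) := by
      rw [stdPdf]; norm_num
    rw [Real.norm_eq_abs, stdPdf, h0, div_sub_div_same, abs_div, abs_of_pos hsp,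
      abs_sub_comm, abs_of_nonneg (by linarith : (0:ℝ) ≤ 1 - Real.exp (-(t^2)/2))]
    calc (1 - Real.exp (-(t^2)/2)) / Real.sqrt (2 * Real.pi)
        ≤ 1 - Real.exp (-(t^2)/2) := by
          apply div_le_self (by linarith) hs
      _ ≤ t ^ 2 / 2 := by linarith
      _ ≤ x ^ 2 / 2 := by linarith
  rw [h1]
  calc |∫ t in (0:ℝ)..x, (stdPdf t - stdPdf 0)| ≤ x ^ 2 / 2 * |x - 0| :=
        intervalIntegral.norm_integral_le_of_norm_le_const key
    _ ≤ |x| ^ 3 := by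
        rw [sub_zero]
        nlinarith [abs_nonneg x, sq_abs x, sq_nonneg x]

lemma stdPdf_tendsto_atBot : Tendsto stdPdf atBot (nhds 0) := by
  have h1 : Tendsto (fun x : ℝ => Real.exp (-(x ^ 2) / 2)) atBot (nhds 0) := by
    refine squeeze_zero' (Eventually.of_forall fun x => (Real.exp_pos _).le) ?_
      Real.tendsto_exp_atBot
    filter_upwards [eventually_le_atBot (-2 : ℝ)] with x hx
    exact Real.exp_le_exp.mpr (by nlinarith)
  have h2 := h1.div_const (Real.sqrt (2 * Real.pi))
  rw [zero_div] at h2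
  exact h2.congr fun x => rfl

lemma integral_Iio_mul_stdPdf (b : ℝ) : ∫ x in Iio b, x * stdPdf x = -stdPdf b := by
  rw [← integral_Iic_eq_integral_Iio]
  have hderiv : ∀ x ∈ Iic b, HasDerivAt (fun y => -stdPdf y) (x * stdPdf x) x := by
    intro x _
    have := (stdPdf_hasDerivAt x).neg
    exact this.congr_deriv (by ring)
  have htend : Tendsto (fun y => -stdPdf y) atBot (nhds 0) := by
    have := stdPdf_tendsto_atBot.neg
    rwa [neg_zero] at this
  have := integral_Iic_of_hasDerivAt_of_tendsto' hderiv
    integrable_mul_stdPdf.integrableOn htend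
  rw [this]; ring

set_option maxHeartbeats 1600000 in
/-- Lemma 1 of the paper: for fixed `u ∈ (0,1)`, as `δ → 0⁺`,
`D(u,δ) = u - (δ/√π) φ(Φ⁻¹(u)) + O(δ³)`. -/
theorem stmt1 (u : ℝ) (hu : u ∈ Set.Ioo (0:ℝ) 1) :
    ∃ C > (0:ℝ), ∃ δ₀ ∈ Set.Ioo (0:ℝ) 1, ∀ δ ∈ Set.Ioo (0:ℝ) δ₀,
      |gaussDiag u δ - u + (δ / Real.sqrt Real.pi) * stdPdf (stdQuantile u)| ≤ C * δ ^ 3 := by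
  obtain ⟨hu0, hu1⟩ := hu
  set b := stdQuantile u with hbdef
  have hΦb : stdCdf b = u := stdCdf_right_inv ⟨hu0, hu1⟩
  set M := ∫ x : ℝ, |x| ^ 3 * stdPdf x with hMdef
  have hM0 : 0 ≤ M := integral_nonneg fun x =>
    mul_nonneg (pow_nonneg (abs_nonneg x) 3) (stdPdf_pos x).le
  have hφb : 0 < stdPdf b := stdPdf_pos b
  refine ⟨stdPdf b + 2 * M + 1, by linarith, 1/2, ⟨by norm_num, by norm_num⟩, ?_⟩
  rintro δ ⟨hδ0, hδhalf⟩
  -- notation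
  set p := Real.sqrt Real.pi with hpdef
  have hp1 : 1 ≤ p := by
    rw [hpdef, show (1:ℝ) = Real.sqrt 1 by simp]
    exact Real.sqrt_le_sqrt (by nlinarith [Real.pi_gt_three])
  set r2 := Real.sqrt 2 with hr2def
  have hr2sq : r2 ^ 2 = 2 := Real.sq_sqrt (by norm_num)
  have hr2ge : 1 ≤ r2 := by
    rw [hr2def, show (1:ℝ) = Real.sqrt 1 by simp]
    exact Real.sqrt_le_sqrt (by norm_num)
  set s := Real.sqrt (2 - δ ^ 2) with hsdef
  have hs2 : s ^ 2 = 2 - δ ^ 2 := Real.sq_sqrt (by nlinarith)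
  have hsnn : 0 ≤ s := Real.sqrt_nonneg _
  have hs1 : 1 ≤ s := by nlinarith
  set a := δ / s with hadef
  have ha0 : 0 ≤ a := div_nonneg hδ0.le (by linarith)
  have haδ : a ≤ δ := div_le_self hδ0.le hs1
  set c := stdPdf 0 with hcdef
  have hceq : c = 1 / (r2 * p) := by
    rw [hcdef, stdPdf, hr2def, hpdef, ← Real.sqrt_mul (by norm_num : (0:ℝ) ≤ 2)]
    norm_num
  -- substitution to x-space
  have himg : stdCdf '' (Iio b) = Ioo 0 u := by rw [stdCdf_image_Iio, hΦb]
  have hsub : ∀ g : ℝ → ℝ, ∫ v in Ioo 0 u, g v = ∫ x in Iio b, stdPdf x * g (stdCdf x) := by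
    intro g
    rw [← himg, integral_image_eq_integral_abs_deriv_smul measurableSet_Iio
      (fun x _ => (stdCdf_hasDerivAt x).hasDerivWithinAt) stdCdf_strictMono.injective.injOn g]
    refine setIntegral_congr_fun measurableSet_Iio fun x _ => ?_
    rw [abs_of_pos (stdPdf_pos x), smul_eq_mul]
  have hgd : gaussDiag u δ = 2 * ∫ x in Iio b, stdPdf x * stdCdf (a * x) := by
    rw [gaussDiag, intervalIntegral.integral_of_le hu0.le, integral_Ioc_eq_integral_Ioo,
      hsub (fun v => stdCdf (δ * stdQuantile v / Real.sqrt (2 - δ ^ 2)))]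
    congr 1
    refine setIntegral_congr_fun measurableSet_Iio fun x _ => ?_
    rw [stdCdf_left_inv, ← hsdef]
    congr 2
    rw [hadef]; ring
  -- integrability on Iio b
  have hint1 : IntegrableOn stdPdf (Iio b) := integrable_stdPdf.integrableOn
  have hint2 : IntegrableOn (fun x => x * stdPdf x) (Iio b) :=
    integrable_mul_stdPdf.integrableOn
  have hint3 : IntegrableOn (fun x : ℝ => |x| ^ 3 * stdPdf x) (Iio b) :=
    integrable_cube_stdPdf.integrableOn
  have hintg : IntegrableOn (fun x => stdCdf (a * x) * stdPdf x) (Iio b) := by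
    refine Integrable.bdd_mul hint1
      ((stdCdf_cont.comp (continuous_const.mul continuous_id)).aestronglyMeasurable)
      (c := 1) (Eventually.of_forall fun x => ?_)
    rw [Real.norm_eq_abs, abs_of_pos (stdCdf_pos _)]
    exact (stdCdf_lt_one _).le
  set T : ℝ → ℝ := fun x => stdCdf (a * x) - 1/2 - c * (a * x) with hTdef
  have hintT : IntegrableOn (fun x => stdPdf x * T x) (Iio b) := by
    have heq : (fun x => stdPdf x * T x)
        = fun x => stdCdf (a * x) * stdPdf x - (1/2) * stdPdf x - (c * a) * (x * stdPdf x) := by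
      funext x; simp only [hTdef]; ring
    rw [heq]
    exact (hintg.sub (hint1.const_mul (1/2))).sub (hint2.const_mul (c * a))
  -- splitting
  have hI0 : ∫ x in Iio b, stdPdf x = u := by
    rw [← integral_Iic_eq_integral_Iio]; exact hΦb
  have hI1 : ∫ x in Iio b, x * stdPdf x = -stdPdf b := integral_Iio_mul_stdPdf b
  have hsplit : ∫ x in Iio b, stdPdf x * stdCdf (a * x)
      = (1/2) * u + (c * a) * (-stdPdf b) + ∫ x in Iio b, stdPdf x * T x := by
    have heq2 : ∀ x : ℝ, stdPdf x * stdCdf (a * x)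
        = (1/2) * stdPdf x + (c * a) * (x * stdPdf x) + stdPdf x * T x := by
      intro x; simp only [hTdef]; ring
    calc ∫ x in Iio b, stdPdf x * stdCdf (a * x)
        = ∫ x in Iio b, ((1/2) * stdPdf x + (c * a) * (x * stdPdf x) + stdPdf x * T x) :=
          setIntegral_congr_fun measurableSet_Iio fun x _ => heq2 x
      _ = (∫ x in Iio b, ((1/2) * stdPdf x + (c * a) * (x * stdPdf x)))
            + ∫ x in Iio b, stdPdf x * T x :=
          integral_add ((hint1.const_mul (1/2)).add (hint2.const_mul (c * a))) hintT
      _ = (∫ x in Iio b, (1/2) * stdPdf x) + (∫ x in Iio b, (c * a) * (x * stdPdf x))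
            + ∫ x in Iio b, stdPdf x * T x := by
          rw [integral_add (hint1.const_mul (1/2)) (hint2.const_mul (c * a))]
      _ = (1/2) * u + (c * a) * (-stdPdf b) + ∫ x in Iio b, stdPdf x * T x := by
          rw [integral_const_mul, integral_const_mul, hI0, hI1]
  set E := ∫ x in Iio b, stdPdf x * T x with hEdef
  have hEbound : |E| ≤ δ ^ 3 * M := by
    have step1 : |E| ≤ ∫ x in Iio b, a ^ 3 * (|x| ^ 3 * stdPdf x) := by
      rw [hEdef, ← Real.norm_eq_abs]
      refine norm_integral_le_of_norm_le (hint3.const_mul (a ^ 3))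
        (Eventually.of_forall fun x => ?_)
      rw [Real.norm_eq_abs, abs_mul, abs_of_pos (stdPdf_pos x)]
      have hT3 : |T x| ≤ a ^ 3 * |x| ^ 3 := by
        have := stdCdf_taylor (a * x)
        rw [abs_mul, abs_of_nonneg ha0, mul_pow] at this
        simpa only [hTdef] using this
      nlinarith [stdPdf_pos x, abs_nonneg (T x), abs_nonneg x, pow_nonneg (abs_nonneg x) 3,
        pow_nonneg ha0 3]
    have step2 : ∫ x in Iio b, a ^ 3 * (|x| ^ 3 * stdPdf x) ≤ a ^ 3 * M := by
      rw [integral_const_mul]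
      refine mul_le_mul_of_nonneg_left ?_ (pow_nonneg ha0 3)
      rw [hMdef]
      refine setIntegral_le_integral integrable_cube_stdPdf
        (Eventually.of_forall fun x =>
          mul_nonneg (pow_nonneg (abs_nonneg x) 3) (stdPdf_pos x).le)
    have ha3 : a ^ 3 ≤ δ ^ 3 := pow_le_pow_left₀ ha0 haδ 3
    calc |E| ≤ a ^ 3 * M := step1.trans step2
      _ ≤ δ ^ 3 * M := mul_le_mul_of_nonneg_right ha3 hM0
  -- the main coefficient estimate
  have hps : (0:ℝ) < p * s := by nlinarith
  have hXeq : δ / p - 2 * c * a = δ * (s - r2) / (p * s) := by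
    rw [hceq, hadef]
    have hr2pos : (0:ℝ) < r2 := by linarith
    have hppos : (0:ℝ) < p := by linarith
    have hspos : (0:ℝ) < s := by linarith
    field_simp
    linear_combination hr2sq
  have hr2s : r2 - s = δ ^ 2 / (r2 + s) := by
    have h : (r2 - s) * (r2 + s) = δ ^ 2 := by nlinarith
    field_simp
    linarith [h]
  have hr2s_nonneg : 0 ≤ r2 - s := by
    rw [hr2s]; positivity
  have hr2s_le : r2 - s ≤ δ ^ 2 / 2 := by
    rw [hr2s]
    gcongr
    linarith
  have hcoef : |δ / p - 2 * c * a| ≤ δ ^ 3 := by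
    rw [hXeq, abs_div, abs_of_pos hps, abs_mul, abs_of_pos hδ0,
      abs_sub_comm, abs_of_nonneg hr2s_nonneg]
    rw [div_le_iff₀ hps]
    have hps1 : 1 ≤ p * s := by nlinarith
    nlinarith [mul_le_mul_of_nonneg_left hr2s_le hδ0.le,
      mul_le_mul_of_nonneg_left hps1 (pow_pos hδ0 3).le]
  -- assemble
  have hfinal : gaussDiag u δ - u + (δ / p) * stdPdf b
      = (δ / p - 2 * c * a) * stdPdf b + 2 * E := by
    rw [hgd, hsplit]
    ring
  rw [hfinal]
  calc |(δ / p - 2 * c * a) * stdPdf b + 2 * E|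
      ≤ |(δ / p - 2 * c * a) * stdPdf b| + |2 * E| := abs_add_le _ _
    _ = |δ / p - 2 * c * a| * stdPdf b + 2 * |E| := by
        rw [abs_mul, abs_of_pos hφb, abs_mul, abs_of_pos (by norm_num : (0:ℝ) < 2)]
    _ ≤ δ ^ 3 * stdPdf b + 2 * (δ ^ 3 * M) := by
        have := mul_le_mul_of_nonneg_right hcoef hφb.le
        linarith [hEbound]
    _ ≤ (stdPdf b + 2 * M + 1) * δ ^ 3 := by nlinarith [pow_pos hδ0 3]
end

section
/- Fix θ > 1 and define, for u, v ∈ (0,1), the conditional Gumbel copula C_{1|2}(u|v) = exp(−(x^θ + y^θ)^{1/θ}) · (x^θ + y^θ)^{1/θ − 1} · y^{θ−1} / v, where x = −ln u and y = −ln v. Then for all w, w₀ > 0: lim_{u→0⁺} [1 − C_{1|2}(1 − u·w | 1 − u·w₀)] = 1 − (1 + (w/w₀)^θ)^{(1−θ)/θ}. -/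
open Filter Set

/-- slope limit: `log(1-uc)/u → -c` as `u → 0` within `u ≠ 0`. -/
lemma slope_log_lin (c : ℝ) :
    Filter.Tendsto (fun u : ℝ => Real.log (1 - u * c) / u)
      (nhdsWithin 0 (Set.Ioi 0)) (nhds (-c)) := by
  have hd : HasDerivAt (fun u : ℝ => Real.log (1 - u * c)) (-c) 0 := by
    have h1 : HasDerivAt (fun u : ℝ => 1 - u * c) (-c) 0 := by
      simpa using ((hasDerivAt_id (0 : ℝ)).mul_const c).const_sub 1
    have := h1.log (by norm_num)
    simpa using this
  have h := (hasDerivAt_iff_tendsto_slope.mp hd)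
  have h' : Filter.Tendsto (slope (fun u : ℝ => Real.log (1 - u * c)) 0)
      (nhdsWithin 0 (Set.Ioi 0)) (nhds (-c)) :=
    h.mono_left (nhdsWithin_mono _ (fun x hx => ne_of_gt hx))
  refine h'.congr' ?_
  filter_upwards [self_mem_nhdsWithin] with u hu
  simp [slope, hu, div_eq_inv_mul]

/-- key algebra: `(x^θ+y^θ)^(1/θ-1) * y^(θ-1) = ((x/y)^θ + 1)^(1/θ-1)` for `x,y>0`. -/
lemma key_alg (θ x y : ℝ) (hθ : 0 < θ) (hx : 0 < x) (hy : 0 < y) :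
    (x ^ θ + y ^ θ) ^ (1 / θ - 1) * y ^ (θ - 1)
      = ((x / y) ^ θ + 1) ^ (1 / θ - 1) := by
  have hyθ : 0 < y ^ θ := Real.rpow_pos_of_pos hy θ
  have hS : 0 < x ^ θ + y ^ θ := by positivity
  have h1 : (x / y) ^ θ + 1 = (x ^ θ + y ^ θ) / y ^ θ := by
    rw [Real.div_rpow hx.le hy.le]
    field_simp
  rw [h1, Real.div_rpow hS.le hyθ.le, ← Real.rpow_mul hy.le]
  have he : θ * (1 / θ - 1) = -(θ - 1) := by field_simp; ring
  rw [he, Real.rpow_neg hy.le]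
  simp [div_eq_mul_inv]

/-- Upper tail function of the Gumbel linking copula (Appendix E): with the conditional
Gumbel copula `C_{1|2}(u|v) = exp(-(x^θ+y^θ)^{1/θ}) (x^θ+y^θ)^{1/θ-1} y^{θ-1} / v`,
`x = -ln u`, `y = -ln v`, one has
`lim_{u→0⁺} [1 - C_{1|2}(1-uw | 1-uw₀)] = 1 - (1 + (w/w₀)^θ)^{(1-θ)/θ}`. -/
theorem stmt15 (θ : ℝ) (hθ : 1 < θ) (w w₀ : ℝ) (hw : 0 < w) (hw₀ : 0 < w₀) :
    Filter.Tendsto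
      (fun u : ℝ =>
        1 - Real.exp (-((-Real.log (1 - u * w)) ^ θ + (-Real.log (1 - u * w₀)) ^ θ) ^ (1/θ)) *
              ((-Real.log (1 - u * w)) ^ θ + (-Real.log (1 - u * w₀)) ^ θ) ^ (1/θ - 1) *
              (-Real.log (1 - u * w₀)) ^ (θ - 1) / (1 - u * w₀))
      (nhdsWithin 0 (Set.Ioi 0))
      (nhds (1 - (1 + (w / w₀) ^ θ) ^ ((1 - θ) / θ))) := by
  have hθ0 : (0 : ℝ) < θ := lt_trans one_pos hθ
  -- eventual basic bounds
  have hev : ∀ᶠ u in nhdsWithin (0 : ℝ) (Set.Ioi 0),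
      0 < u ∧ 0 < 1 - u * w ∧ 1 - u * w < 1 ∧ 0 < 1 - u * w₀ ∧ 1 - u * w₀ < 1 := by
    have h1 : Set.Ioo (0 : ℝ) (min (1 / w) (1 / w₀)) ∈ nhdsWithin (0 : ℝ) (Set.Ioi 0) := by
      apply Ioo_mem_nhdsGT_of_mem
      exact ⟨le_refl 0, lt_min (by positivity) (by positivity)⟩
    filter_upwards [h1] with u hu
    obtain ⟨hu0, hu1⟩ := hu
    have huw : u * w < 1 := by
      have : u < 1 / w := lt_of_lt_of_le hu1 (min_le_left _ _)
      calc u * w < (1 / w) * w := by exact mul_lt_mul_of_pos_right this hw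
        _ = 1 := by field_simp
    have huw₀ : u * w₀ < 1 := by
      have : u < 1 / w₀ := lt_of_lt_of_le hu1 (min_le_right _ _)
      calc u * w₀ < (1 / w₀) * w₀ := by exact mul_lt_mul_of_pos_right this hw₀
        _ = 1 := by field_simp
    refine ⟨hu0, by linarith, by nlinarith, by linarith, by nlinarith⟩
  -- limit of x/y
  have hratio : Filter.Tendsto
      (fun u : ℝ => (-Real.log (1 - u * w)) / (-Real.log (1 - u * w₀)))
      (nhdsWithin 0 (Set.Ioi 0)) (nhds (w / w₀)) := by
    have hq := (slope_log_lin w).div (slope_log_lin w₀) (by simpa using hw₀.ne')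
    have hval : (-w) / (-w₀) = w / w₀ := by field_simp
    rw [hval] at hq
    refine hq.congr' ?_
    filter_upwards [self_mem_nhdsWithin] with u hu
    have hu0 : u ≠ 0 := ne_of_gt hu
    simp only [Pi.div_apply]
    rw [div_div_div_cancel_right₀ hu0, neg_div_neg_eq]
  -- limit of x, y individually to 0
  have hlog : ∀ c : ℝ, Filter.Tendsto (fun u : ℝ => -Real.log (1 - u * c))
      (nhdsWithin (0 : ℝ) (Set.Ioi 0)) (nhds 0) := by
    intro c
    have hc : Continuous fun u : ℝ => 1 - u * c := by continuity
    have h := ContinuousAt.comp (g := Real.log) (f := fun u : ℝ => 1 - u * c) (x := 0)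
      (Real.continuousAt_log (by norm_num)) (hc.continuousAt)
    have h2 : Filter.Tendsto (fun u : ℝ => Real.log (1 - u * c)) (nhds 0) (nhds 0) := by
      simpa [Function.comp_def] using h.tendsto
    have := h2.neg
    simpa using this.mono_left nhdsWithin_le_nhds
  -- limit of S = x^θ + y^θ to 0
  have hS : Filter.Tendsto
      (fun u : ℝ => (-Real.log (1 - u * w)) ^ θ + (-Real.log (1 - u * w₀)) ^ θ)
      (nhdsWithin (0 : ℝ) (Set.Ioi 0)) (nhds 0) := by
    have h1 := ((hlog w).rpow_const (Or.inr hθ0.le))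
    have h2 := ((hlog w₀).rpow_const (Or.inr hθ0.le))
    have := h1.add h2
    simpa [Real.zero_rpow hθ0.ne'] using this
  -- limit of exp(-S^{1/θ}) to 1
  have hexp : Filter.Tendsto
      (fun u : ℝ => Real.exp
        (-((-Real.log (1 - u * w)) ^ θ + (-Real.log (1 - u * w₀)) ^ θ) ^ (1/θ)))
      (nhdsWithin (0 : ℝ) (Set.Ioi 0)) (nhds 1) := by
    have h1 := hS.rpow_const (Or.inr (by positivity : (0:ℝ) ≤ 1/θ))
    rw [Real.zero_rpow (by positivity : (1:ℝ)/θ ≠ 0)] at h1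
    have h1' := h1.neg
    rw [neg_zero] at h1'
    have := (Real.continuous_exp.tendsto 0).comp h1'
    simpa [Function.comp_def, Real.exp_zero] using this
  -- limit of middle term ((x/y)^θ + 1)^{1/θ-1}
  have hmid : Filter.Tendsto
      (fun u : ℝ => (((-Real.log (1 - u * w)) / (-Real.log (1 - u * w₀))) ^ θ + 1) ^ (1/θ - 1))
      (nhdsWithin (0 : ℝ) (Set.Ioi 0)) (nhds ((1 + (w / w₀) ^ θ) ^ ((1 - θ) / θ))) := by
    have h1 := hratio.rpow_const (Or.inr hθ0.le)
    have h2 : Filter.Tendsto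
        (fun u : ℝ => ((-Real.log (1 - u * w)) / (-Real.log (1 - u * w₀))) ^ θ + 1)
        (nhdsWithin (0 : ℝ) (Set.Ioi 0)) (nhds ((w / w₀) ^ θ + 1)) := h1.add_const 1
    have hpos : (0 : ℝ) < (w / w₀) ^ θ + 1 := by positivity
    have h3 := h2.rpow_const (p := 1/θ - 1) (Or.inl hpos.ne')
    have heq : ((w / w₀) ^ θ + 1) ^ (1/θ - 1) = (1 + (w / w₀) ^ θ) ^ ((1 - θ) / θ) := by
      rw [add_comm]
      congr 1
      field_simp
    rw [heq] at h3
    exact h3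
  -- limit of denominator
  have hden : Filter.Tendsto (fun u : ℝ => 1 - u * w₀)
      (nhdsWithin (0 : ℝ) (Set.Ioi 0)) (nhds 1) := by
    have : Continuous fun u : ℝ => 1 - u * w₀ := by continuity
    have := this.tendsto 0
    simpa using this.mono_left nhdsWithin_le_nhds
  -- combine
  have hmain : Filter.Tendsto
      (fun u : ℝ =>
        1 - Real.exp (-((-Real.log (1 - u * w)) ^ θ + (-Real.log (1 - u * w₀)) ^ θ) ^ (1/θ)) *
              (((-Real.log (1 - u * w)) / (-Real.log (1 - u * w₀))) ^ θ + 1) ^ (1/θ - 1) /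
              (1 - u * w₀))
      (nhdsWithin (0 : ℝ) (Set.Ioi 0))
      (nhds (1 - (1 + (w / w₀) ^ θ) ^ ((1 - θ) / θ))) := by
    have := ((hexp.mul hmid).div hden one_ne_zero).const_sub 1
    simpa using this
  refine hmain.congr' ?_
  filter_upwards [hev] with u hu
  obtain ⟨hu0, h1, h2, h3, h4⟩ := hu
  have hx : 0 < -Real.log (1 - u * w) := by
    have := Real.log_neg h1 h2
    linarith
  have hy : 0 < -Real.log (1 - u * w₀) := by
    have := Real.log_neg h3 h4
    linarith
  have halg := key_alg θ (-Real.log (1 - u * w)) (-Real.log (1 - u * w₀)) hθ0 hx hy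
  rw [← halg]
  ring
end

section
/- Fix θ_j > θ_k > 0 and set ϑ = (θ_j + 1)/(θ_j − θ_k) (so ϑ > 1). Then ∫₀¹ max( (θ_j + 1)·v^{θ_j}, (θ_k + 1)·v^{θ_k} ) dv = 1 + (ϑ − 1)^{ϑ−1} / ϑ^{ϑ}. -/
open MeasureTheory Set

/-- Appendix F of the paper: for Clayton linking copulas with parameters `θⱼ > θₖ > 0`,
`∫₀¹ max((θⱼ+1)v^{θⱼ}, (θₖ+1)v^{θₖ}) dv = 1 + (ϑ-1)^{ϑ-1}/ϑ^ϑ` with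
`ϑ = (θⱼ+1)/(θⱼ-θₖ)`. -/
theorem stmt18 (θj θk : ℝ) (hθk : 0 < θk) (hjk : θk < θj) :
    (∫ v in (0:ℝ)..1, max ((θj + 1) * v ^ θj) ((θk + 1) * v ^ θk)) =
      1 + ((θj + 1) / (θj - θk) - 1) ^ ((θj + 1) / (θj - θk) - 1) /
        ((θj + 1) / (θj - θk)) ^ ((θj + 1) / (θj - θk)) := by
  have hθj : 0 < θj := lt_trans hθk hjk
  have hd : (0:ℝ) < θj - θk := by linarith
  have hj1 : (0:ℝ) < θj + 1 := by linarith
  have hk1 : (0:ℝ) < θk + 1 := by linarith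
  set d : ℝ := θj - θk with hdef
  set r : ℝ := (θk + 1) / (θj + 1) with hrdef
  have hr0 : 0 < r := div_pos hk1 hj1
  have hr1 : r < 1 := (div_lt_one hj1).mpr (by linarith)
  set c : ℝ := r ^ (1/d) with hcdef
  have hc0 : 0 < c := Real.rpow_pos_of_pos hr0 _
  have hc1 : c ≤ 1 := Real.rpow_le_one hr0.le hr1.le (by positivity)
  have hcd : c ^ d = r := by
    rw [hcdef, ← Real.rpow_mul hr0.le, one_div_mul_cancel hd.ne', Real.rpow_one]
  -- continuity / integrability
  have hcont : Continuous fun v : ℝ => max ((θj + 1) * v ^ θj) ((θk + 1) * v ^ θk) := by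
    apply Continuous.max
    · exact continuous_const.mul (Real.continuous_rpow_const hθj.le)
    · exact continuous_const.mul (Real.continuous_rpow_const hθk.le)
  -- split
  have hsplit : (∫ v in (0:ℝ)..1, max ((θj + 1) * v ^ θj) ((θk + 1) * v ^ θk))
      = (∫ v in (0:ℝ)..c, max ((θj + 1) * v ^ θj) ((θk + 1) * v ^ θk))
      + (∫ v in c..1, max ((θj + 1) * v ^ θj) ((θk + 1) * v ^ θk)) := by
    rw [intervalIntegral.integral_add_adjacent_intervals
      (hcont.intervalIntegrable _ _) (hcont.intervalIntegrable _ _)]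
  -- on [0,c] max is the θk one
  have h1 : (∫ v in (0:ℝ)..c, max ((θj + 1) * v ^ θj) ((θk + 1) * v ^ θk))
      = ∫ v in (0:ℝ)..c, (θk + 1) * v ^ θk := by
    apply intervalIntegral.integral_congr
    intro v hv
    rw [Set.uIcc_of_le hc0.le] at hv
    apply max_eq_right
    rcases eq_or_lt_of_le hv.1 with h0 | h0
    · rw [← h0, Real.zero_rpow hθj.ne', Real.zero_rpow hθk.ne']
      simp
    · have hvd : v ^ d ≤ r := by
        rw [← hcd]
        exact Real.rpow_le_rpow h0.le hv.2 hd.le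
      have : v ^ θj = v ^ θk * v ^ d := by
        rw [← Real.rpow_add h0, hdef]; ring_nf
      rw [this]
      have hk : (0:ℝ) < v ^ θk := Real.rpow_pos_of_pos h0 _
      calc (θj + 1) * (v ^ θk * v ^ d) ≤ (θj + 1) * (v ^ θk * r) := by
            apply mul_le_mul_of_nonneg_left _ hj1.le
            exact mul_le_mul_of_nonneg_left hvd hk.le
        _ = (θk + 1) * v ^ θk := by
            rw [hrdef]; field_simp
  -- on [c,1] max is the θj one
  have h2 : (∫ v in c..1, max ((θj + 1) * v ^ θj) ((θk + 1) * v ^ θk))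
      = ∫ v in c..1, (θj + 1) * v ^ θj := by
    apply intervalIntegral.integral_congr
    intro v hv
    rw [Set.uIcc_of_le hc1] at hv
    apply max_eq_left
    have h0 : 0 < v := lt_of_lt_of_le hc0 hv.1
    have hvd : r ≤ v ^ d := by
      rw [← hcd]
      exact Real.rpow_le_rpow hc0.le hv.1 hd.le
    have hvj : v ^ θj = v ^ θk * v ^ d := by
      rw [← Real.rpow_add h0, hdef]; ring_nf
    rw [hvj]
    have hk : (0:ℝ) < v ^ θk := Real.rpow_pos_of_pos h0 _
    calc (θk + 1) * v ^ θk = (θj + 1) * (v ^ θk * r) := by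
          rw [hrdef]; field_simp
      _ ≤ (θj + 1) * (v ^ θk * v ^ d) := by
          apply mul_le_mul_of_nonneg_left _ hj1.le
          exact mul_le_mul_of_nonneg_left hvd hk.le
  -- compute each piece
  have e1 : (∫ v in (0:ℝ)..c, (θk + 1) * v ^ θk) = c ^ (θk + 1) := by
    rw [intervalIntegral.integral_const_mul, integral_rpow (Or.inl (by linarith))]
    rw [Real.zero_rpow (by positivity : θk + 1 ≠ 0)]
    field_simp
    simp
  have e2 : (∫ v in c..1, (θj + 1) * v ^ θj) = 1 - c ^ (θj + 1) := by
    rw [intervalIntegral.integral_const_mul, integral_rpow (Or.inl (by linarith))]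
    rw [Real.one_rpow]
    field_simp
  rw [hsplit, h1, h2, e1, e2]
  -- algebra
  set ϑ : ℝ := (θj + 1) / d with hϑdef
  have hϑ1 : 1 < ϑ := (one_lt_div hd).mpr (by linarith)
  have hϑ0 : 0 < ϑ := lt_trans one_pos hϑ1
  have hϑm : ϑ - 1 = (θk + 1) / d := by
    rw [hϑdef]; field_simp; rw [hdef]; ring
  have hck : c ^ (θk + 1) = r ^ (ϑ - 1) := by
    rw [hcdef, ← Real.rpow_mul hr0.le, hϑm]; ring_nf
  have hcj : c ^ (θj + 1) = r ^ ϑ := by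
    rw [hcdef, ← Real.rpow_mul hr0.le, hϑdef]; ring_nf
  have hrϑ : r = (ϑ - 1) / ϑ := by
    rw [hϑm, hϑdef, hrdef]
    field_simp
  have hrsub : 1 - r = 1 / ϑ := by
    rw [hrϑ]; field_simp; ring
  rw [hck, hcj]
  have hsplit2 : r ^ ϑ = r ^ (ϑ - 1) * r := by
    rw [← Real.rpow_add_one hr0.ne' (ϑ - 1), sub_add_cancel]
  have hϑm0 : 0 ≤ ϑ - 1 := by linarith
  have hrp : r ^ (ϑ - 1) = (ϑ - 1) ^ (ϑ - 1) / ϑ ^ (ϑ - 1) := by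
    rw [hrϑ, Real.div_rpow hϑm0 hϑ0.le]
  have hϑϑ : ϑ ^ ϑ = ϑ ^ (ϑ - 1) * ϑ := by
    rw [← Real.rpow_add_one hϑ0.ne' (ϑ - 1), sub_add_cancel]
  have hϑp : (0:ℝ) < ϑ ^ (ϑ - 1) := Real.rpow_pos_of_pos hϑ0 _
  have key : r ^ (ϑ - 1) + (1 - r ^ (ϑ - 1) * r) = 1 + r ^ (ϑ - 1) * (1 - r) := by ring
  rw [hsplit2, key, hrsub, hrp, hϑϑ, div_mul_div_comm, mul_one]
end
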